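/- arXiv:2002.02228 — 2 statements merged into one kernel-verified Lean document; each statement's English description precedes it below -/
import Mathlib

section
/- Let A₁ and A₂ be two non-ground, simple, covering literals each containing a compound term, and suppose A₁ and A₂ are unifiable by an mgu σ. Then the compound terms of A₁ and A₂ match each other: whenever a compound term occurs at some argument position of A₁, the argument of A₂ at the same position is a compound term, and vice versa. -/
/-!
Common formalization of first-order clausal logic (without equality), following
"Resolution-based query answering and rewriting for the (loosely) guarded fragment".
-/

set_option linter.unusedVariables false

namespace QGF

/-- Symbols: function symbols, constant symbols and predicate symbols, each indexed by ℕ. -/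
inductive Head : Type
  | fn : ℕ → Head
  | cn : ℕ → Head
  | pr : ℕ → Head
  deriving DecidableEq

/-- First-order terms.  A constant `c` is represented as `Term.app (Head.cn c) []`. -/
inductive Term : Type
  | var : ℕ → Term
  | app : Head → List Term → Term

namespace Term

def isVar : Term → Prop
  | var _ => True
  | _ => False

def isConst : Term → Prop
  | app (.cn _) [] => True
  | _ => False

/-- A compound term is a term that is neither a variable nor a constant. -/
def isCompound (t : Term) : Prop := ¬ t.isVar ∧ ¬ t.isConst

/-- Occurrence of a variable in a term. -/
inductive HasVar : Term → ℕ → Prop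
  | var (x : ℕ) : HasVar (var x) x
  | app {h : Head} {ts : List Term} {x : ℕ} {t : Term} :
      t ∈ ts → HasVar t x → HasVar (app h ts) x

def vars (t : Term) : Set ℕ := {x | t.HasVar x}

/-- Subterm relation. -/
inductive SubtermOf : Term → Term → Prop
  | refl (t : Term) : SubtermOf t t
  | app {s : Term} {h : Head} {ts : List Term} {t : Term} :
      t ∈ ts → SubtermOf s t → SubtermOf s (app h ts)

/-- Depth of a term: variables and constants have depth 0. -/
def depth : Term → ℕ
  | var _ => 0
  | app _ ts => (ts.attach.map fun t => depth t.1 + 1).foldr max 0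
  decreasing_by
    have := List.sizeOf_lt_of_mem t.2
    simp only [Term.app.sizeOf_spec]
    omega

/-- Applying a substitution to a term. -/
def subst (σ : ℕ → Term) : Term → Term
  | var x => σ x
  | app h ts => app h (ts.attach.map fun t => subst σ t.1)
  decreasing_by
    have := List.sizeOf_lt_of_mem t.2
    simp only [Term.app.sizeOf_spec]
    omega

def isGround (t : Term) : Prop := t.vars = ∅

/-- An argument is flat if it is a variable or a constant. -/
def flatArg (t : Term) : Prop := t.isVar ∨ t.isConst

/-- An argument is simple if it is a variable, a constant, or a compound term all of
whose arguments are variables or constants. -/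
def simpleArg : Term → Prop
  | var _ => True
  | app _ ts => ∀ u ∈ ts, flatArg u

end Term

/-- Substitutions. -/
abbrev Subst := ℕ → Term

/-- Atoms. -/
structure Atom where
  pred : ℕ
  args : List Term

namespace Atom

def subst (σ : Subst) (a : Atom) : Atom := ⟨a.pred, a.args.map (Term.subst σ)⟩

def vars (a : Atom) : Set ℕ := {x | ∃ t ∈ a.args, x ∈ t.vars}

def flat (a : Atom) : Prop := ∀ t ∈ a.args, t.flatArg

def simple (a : Atom) : Prop := ∀ t ∈ a.args, t.simpleArg

def ground (a : Atom) : Prop := a.vars = ∅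

/-- An atom `P(t₁,…,tₙ)` viewed as the term with head the predicate symbol `P`. -/
def toTerm (a : Atom) : Term := .app (.pr a.pred) a.args

end Atom

/-- Literals. -/
structure Lit where
  pos : Bool
  atom : Atom

def Lit.mkPos (a : Atom) : Lit := ⟨true, a⟩
def Lit.mkNeg (a : Atom) : Lit := ⟨false, a⟩

namespace Lit

def subst (σ : Subst) (L : Lit) : Lit := ⟨L.pos, L.atom.subst σ⟩

def vars (L : Lit) : Set ℕ := L.atom.vars

def ground (L : Lit) : Prop := L.vars = ∅

def flat (L : Lit) : Prop := L.atom.flat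

def simple (L : Lit) : Prop := L.atom.simple

/-- Occurrence of a term in a literal (as a subterm of an argument). -/
def hasTerm (L : Lit) (t : Term) : Prop := ∃ u ∈ L.atom.args, t.SubtermOf u

def hasCompound (L : Lit) : Prop := ∃ t, L.hasTerm t ∧ t.isCompound

/-- A literal is covering if every compound term occurring in it contains exactly the
variables of the literal. -/
def covering (L : Lit) : Prop := ∀ t, L.hasTerm t → t.isCompound → t.vars = L.vars

end Lit

/-- A clause is a (multi)set of literals, represented as a list, read disjunctively,
with all variables implicitly universally quantified. -/
abbrev Clause := List Lit

namespace Clause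

def subst (σ : Subst) (C : Clause) : Clause := C.map (Lit.subst σ)

def vars (C : Clause) : Set ℕ := {x | ∃ L ∈ C, x ∈ L.vars}

def ground (C : Clause) : Prop := vars C = ∅

def flat (C : Clause) : Prop := ∀ L ∈ C, L.flat

def simple (C : Clause) : Prop := ∀ L ∈ C, L.simple

def hasTerm (C : Clause) (t : Term) : Prop := ∃ L ∈ C, L.hasTerm t

/-- A clause is covering if every compound term occurring in it contains exactly the
variables of the clause. -/
def covering (C : Clause) : Prop := ∀ t, hasTerm C t → t.isCompound → t.vars = vars C

def hasNegCompound (C : Clause) : Prop := ∃ L ∈ C, L.pos = false ∧ L.hasCompound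

def hasCompound (C : Clause) : Prop := ∃ L ∈ C, L.hasCompound

/-- The predicate symbols occurring in a clause. -/
def preds (C : Clause) : Set ℕ := {p | ∃ L ∈ C, L.atom.pred = p}

/-- The depth of a clause: the maximal depth of a term occurring in it. -/
def depth (C : Clause) : ℕ :=
  (C.map fun L => (L.atom.args.map Term.depth).foldr max 0).foldr max 0

end Clause

/-- `L` is a guard of `C`:  a negative flat literal of `C` containing all variables of `C`. -/
def Lit.isGuardOf (L : Lit) (C : Clause) : Prop :=
  L ∈ C ∧ L.pos = false ∧ L.flat ∧ L.vars = Clause.vars C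

/-- Guarded clauses (Definition 3.3). -/
def Clause.guarded (C : Clause) : Prop :=
  Clause.simple C ∧ Clause.covering C ∧ (Clause.ground C ∨ ∃ L : Lit, L.isGuardOf C)

/-- `G` is a set of loose guards of `C`. -/
def Clause.looseGuardsOf (G : List Lit) (C : Clause) : Prop :=
  (∀ L ∈ G, L ∈ C ∧ L.pos = false ∧ L.flat) ∧
  (∀ x ∈ Clause.vars C, ∃ L ∈ G, x ∈ L.vars) ∧
  (∀ x ∈ Clause.vars C, ∀ y ∈ Clause.vars C, x ≠ y → ∃ L ∈ G, x ∈ L.vars ∧ y ∈ L.vars)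

/-- Loosely guarded clauses (Definition 3.3). -/
def Clause.looselyGuarded (C : Clause) : Prop :=
  Clause.simple C ∧ Clause.covering C ∧
    (Clause.ground C ∨ ∃ G : List Lit, Clause.looseGuardsOf G C)

/-- Query clauses: flat clauses containing only negative literals (Definition 3.2). -/
def Clause.query (C : Clause) : Prop := Clause.flat C ∧ ∀ L ∈ C, L.pos = false

/-! ### Semantics -/

/-- First-order interpretations. -/
structure Interp : Type 1 where
  dom : Type
  nonempty : Nonempty dom
  fn : Head → List dom → dom
  pr : ℕ → List dom → Prop

def Term.eval (I : Interp) (ν : ℕ → I.dom) : Term → I.dom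
  | .var x => ν x
  | .app h ts => I.fn h (ts.attach.map fun t => Term.eval I ν t.1)
  decreasing_by
    have := List.sizeOf_lt_of_mem t.2
    simp only [Term.app.sizeOf_spec]
    omega

def Atom.holds (I : Interp) (ν : ℕ → I.dom) (a : Atom) : Prop :=
  I.pr a.pred (a.args.map (Term.eval I ν))

def Lit.holds (I : Interp) (ν : ℕ → I.dom) (L : Lit) : Prop :=
  if L.pos then L.atom.holds I ν else ¬ L.atom.holds I ν

/-- A clause holds under a valuation if one of its literals does. -/
def Clause.holdsUnder (I : Interp) (ν : ℕ → I.dom) (C : Clause) : Prop :=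
  ∃ L ∈ C, L.holds I ν

/-- A clause is true in an interpretation if its universal closure holds. -/
def Clause.trueIn (I : Interp) (C : Clause) : Prop := ∀ ν, Clause.holdsUnder I ν C

def Interp.models (I : Interp) (N : Set Clause) : Prop := ∀ C ∈ N, Clause.trueIn I C

/-- Satisfiability of a set of clauses. -/
def satisfiable (N : Set Clause) : Prop := ∃ I : Interp, I.models N

/-- Logical consequence:  every model of `N` is a model of `C`. -/
def entails (N : Set Clause) (C : Clause) : Prop :=
  ∀ I : Interp, I.models N → Clause.trueIn I C

/-- A tautology is a clause true in every interpretation. -/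
def Tautology (C : Clause) : Prop := ∀ (I : Interp) (ν : ℕ → I.dom), Clause.holdsUnder I ν C

/-- Two clauses are variants if each is an instance of the other. -/
def Variant (C D : Clause) : Prop :=
  (∃ σ : Subst, Clause.subst σ C = D) ∧ (∃ ρ : Subst, Clause.subst ρ D = C)

/-! ### Unification -/

def Unifies (σ : Subst) (a b : Atom) : Prop := a.subst σ = b.subst σ

/-- Most general unifiers. -/
def IsMGU (σ : Subst) (a b : Atom) : Prop :=
  Unifies σ a b ∧ ∀ θ : Subst, Unifies θ a b → ∃ ρ : Subst, ∀ x, (σ x).subst ρ = θ x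

def Lit.unifies (σ : Subst) (L1 L2 : Lit) : Prop := L1.subst σ = L2.subst σ

def Lit.isMGU (σ : Subst) (L1 L2 : Lit) : Prop :=
  Lit.unifies σ L1 L2 ∧ ∀ θ : Subst, Lit.unifies θ L1 L2 → ∃ ρ : Subst, ∀ x, (σ x).subst ρ = θ x

def UnifiesAll (σ : Subst) (ps : List (Atom × Atom)) : Prop :=
  ∀ p ∈ ps, Atom.subst σ p.1 = Atom.subst σ p.2

/-- Simultaneous most general unifiers. -/
def IsSimMGU (σ : Subst) (ps : List (Atom × Atom)) : Prop :=
  UnifiesAll σ ps ∧ ∀ θ : Subst, UnifiesAll θ ps → ∃ ρ : Subst, ∀ x, (σ x).subst ρ = θ x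

/-! ### Condensation, separability -/

/-- `D` is a subclause of `C` (as multisets). -/
def SubClause (D C : Clause) : Prop := (↑D : Multiset Lit) ≤ (↑C : Multiset Lit)

/-- `D` is a condensation of `C`: a proper subclause of `C` which is an instance of `C`
(up to duplicate literals). -/
def IsCondensation (D C : Clause) : Prop :=
  SubClause D C ∧ D.length < C.length ∧
    ∃ σ : Subst, ∀ L : Lit, L ∈ D ↔ L ∈ Clause.subst σ C

/-- A clause `C ∨ D` is separable into `C` and `D` if both are non-empty and neither
variable set is included in the other. -/
def Separable (C D : Clause) : Prop :=
  C ≠ [] ∧ D ≠ [] ∧ ¬ Clause.vars C ⊆ Clause.vars D ∧ ¬ Clause.vars D ⊆ Clause.vars C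

/-- A clause is indecomposable if it cannot be partitioned into two non-empty
variable-disjoint subclauses. -/
def Clause.indecomposable (C : Clause) : Prop :=
  ¬ ∃ D E : Clause, D ≠ [] ∧ E ≠ [] ∧
      (↑C : Multiset Lit) = (↑D : Multiset Lit) + (↑E : Multiset Lit) ∧
      Clause.vars D ∩ Clause.vars E = ∅

/-- The predicate symbols occurring in a clause set. -/
def SetPreds (N : Set Clause) : Set ℕ := {p | ∃ C ∈ N, p ∈ Clause.preds C}

/-! ### Orderings -/

namespace Head

def rank : Head → ℕ
  | .pr _ => 0
  | .cn _ => 1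
  | .fn _ => 2

def idx : Head → ℕ
  | .pr n => n
  | .cn n => n
  | .fn n => n

/-- The precedence: every function symbol is greater than every constant, and every
constant is greater than every predicate symbol. -/
def prec (g h : Head) : Prop := g.rank < h.rank ∨ (g.rank = h.rank ∧ g.idx < h.idx)

end Head

/-- The lexicographic path ordering on terms induced by the precedence `Head.prec`.
`LpoGT s t` means `s ≻_lpo t`. -/
inductive LpoGT : Term → Term → Prop
  | subRefl {h : Head} {ss : List Term} {t : Term} :
      t ∈ ss → LpoGT (.app h ss) t
  | sub {h : Head} {ss : List Term} {t : Term} (s : Term) :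
      s ∈ ss → LpoGT s t → LpoGT (.app h ss) t
  | prec {h g : Head} {ss ts : List Term} :
      Head.prec g h → (∀ t ∈ ts, LpoGT (.app h ss) t) → LpoGT (.app h ss) (.app g ts)
  | lex {h : Head} {ss ts u ss' ts' : List Term} {s t : Term} :
      ss = u ++ s :: ss' → ts = u ++ t :: ts' → LpoGT s t →
      (∀ t' ∈ ts, LpoGT (.app h ss) t') → LpoGT (.app h ss) (.app h ts)

/-- The induced lexicographic path ordering on literals, where a negative literal is
greater than the corresponding positive literal. -/
def Lit.lpoGT (L1 L2 : Lit) : Prop :=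
  LpoGT L1.atom.toTerm L2.atom.toTerm ∨
    (L1.atom.toTerm = L2.atom.toTerm ∧ L1.pos = false ∧ L2.pos = true)

/-- Admissible orderings on literals; `ord L L'` means `L ≻ L'`. -/
structure Admissible (ord : Lit → Lit → Prop) : Prop where
  trans : ∀ {a b c : Lit}, ord a b → ord b c → ord a c
  irrefl : ∀ a : Lit, ¬ ord a a
  totalGround : ∀ a b : Lit, a.ground → b.ground → a = b ∨ ord a b ∨ ord b a
  wfGround : WellFounded fun a b : Lit => a.ground ∧ b.ground ∧ ord b a
  liftable : ∀ (a b : Lit) (σ : Subst), ord a b → ord (a.subst σ) (b.subst σ)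
  negGtPos : ∀ a : Atom, a.ground → ord (Lit.mkNeg a) (Lit.mkPos a)
  negCompat : ∀ a b : Atom, a.ground → b.ground →
    ord (Lit.mkPos b) (Lit.mkPos a) → ord (Lit.mkPos b) (Lit.mkNeg a)

/-- The multiset extension of a literal ordering to clauses; `ClauseGT ord C D` means
`C ≻ D`. -/
def ClauseGT (ord : Lit → Lit → Prop) (C D : Clause) : Prop :=
  ∃ X Y Z : Multiset Lit,
    (↑C : Multiset Lit) = Z + X ∧ (↑D : Multiset Lit) = Z + Y ∧ X ≠ 0 ∧
      ∀ y ∈ Y, ∃ x ∈ X, ord x y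

/-- `L` is maximal with respect to a clause `C` (`C` not necessarily containing `L`):
some ground instance of `L` is not smaller than the corresponding instances of the
literals of `C`. -/
def maxIn (ord : Lit → Lit → Prop) (L : Lit) (C : Clause) : Prop :=
  ∃ σ : Subst, Lit.ground (L.subst σ) ∧ Clause.ground (Clause.subst σ C) ∧
    ∀ L' ∈ C, ¬ ord (Lit.subst σ L') (Lit.subst σ L)

/-- `L` is strictly maximal with respect to a clause `C`. -/
def strictMaxIn (ord : Lit → Lit → Prop) (L : Lit) (C : Clause) : Prop :=
  ∃ σ : Subst, Lit.ground (L.subst σ) ∧ Clause.ground (Clause.subst σ C) ∧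
    ∀ L' ∈ C, ord (Lit.subst σ L) (Lit.subst σ L')

/-! ### Redundancy -/

def GroundInstanceOf (D C : Clause) : Prop := (∃ σ : Subst, D = Clause.subst σ C) ∧ Clause.ground D

/-- Redundancy of a clause with respect to a clause set `N`:  every ground instance is
entailed by finitely many smaller ground instances of clauses of `N`. -/
def redundantClause (ord : Lit → Lit → Prop) (N : Set Clause) (C : Clause) : Prop :=
  ∀ D : Clause, GroundInstanceOf D C →
    ∃ S : Finset Clause, (∀ E ∈ S, ∃ C' ∈ N, GroundInstanceOf E C') ∧
      entails (↑S) D ∧ ∀ E ∈ S, ClauseGT ord D E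

/-- An inference is redundant in `N` if a premise is redundant, or its conclusion is
redundant in `N` or belongs to `N`. -/
def RedundantInference (ord : Lit → Lit → Prop) (N : Set Clause)
    (premises : List Clause) (concl : Clause) : Prop :=
  (∃ p ∈ premises, redundantClause ord N p) ∨ redundantClause ord N concl ∨ concl ∈ N

/-! ### Selection and eligibility -/

/-- Selection functions: select a set of negative literals of a clause. -/
def SelFn := Clause → Set Lit

def SelOK (sel : SelFn) : Prop := ∀ C : Clause, ∀ L ∈ sel C, L ∈ C ∧ L.pos = false

/-- A literal is eligible if it is selected, or nothing is selected and it is maximal. -/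
def Eligible (ord : Lit → Lit → Prop) (sel : SelFn) (C : Clause) (L : Lit) : Prop :=
  (sel C = ∅ ∧ L ∈ C ∧ maxIn ord L C) ∨ L ∈ sel C

/-- Eligibility under the refinement T-Refine (Algorithm 1), in the cases not depending
on side premises:  maximal literals for ground clauses and clauses with positive
compound terms, a selected negative compound-term literal, or a selected guard. -/
def EligibleTR (C : Clause) (L : Lit) : Prop :=
  L ∈ C ∧
    ((Clause.ground C ∧ maxIn Lit.lpoGT L C) ∨
     (¬ Clause.ground C ∧ Clause.hasNegCompound C ∧ L.pos = false ∧ L.hasCompound) ∨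
     (¬ Clause.ground C ∧ ¬ Clause.hasNegCompound C ∧ Clause.hasCompound C ∧
        maxIn Lit.lpoGT L C) ∨
     (¬ Clause.ground C ∧ ¬ Clause.hasCompound C ∧ L.isGuardOf C))

/-! ### Top-variable resolution -/

/-- `x` is a top variable of the negative atoms `A i` with respect to the candidate
unifier `σ'`:  the depth of `σ' x` is maximal. -/
def IsTopVar (n : ℕ) (A : Fin n → Atom) (σ' : Subst) (x : ℕ) : Prop :=
  (∃ i, x ∈ (A i).vars) ∧
    ∀ y : ℕ, (∃ i, y ∈ (A i).vars) → (σ' y).depth ≤ (σ' x).depth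

/-- The data of an application of the top-variable resolution rule TRes:
main premise `¬A₁ ∨ … ∨ ¬Aₙ ∨ D`,  side premises `Bᵢ ∨ Dᵢ`,
`σ'` a simultaneous mgu of all `n` pairs used to compute top variables, and
`σ` a simultaneous mgu of the first `m` (top-variable) pairs. -/
structure TResApp where
  n : ℕ
  m : ℕ
  A : Fin n → Atom
  B : Fin n → Atom
  Ds : Fin n → Clause
  D : Clause
  σ' : Subst
  σ : Subst

namespace TResApp

def mainPremise (t : TResApp) : Clause :=
  (List.ofFn fun i => Lit.mkNeg (t.A i)) ++ t.D

def sidePremise (t : TResApp) (i : Fin t.n) : Clause :=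
  Lit.mkPos (t.B i) :: t.Ds i

def sidePremises (t : TResApp) : List Clause := List.ofFn t.sidePremise

def resolvent (t : TResApp) : Clause :=
  Clause.subst t.σ
    ((((List.finRange t.n).filter fun i => i.1 < t.m).flatMap t.Ds) ++
     (((List.finRange t.n).filter fun i => t.m ≤ i.1).map fun i => Lit.mkNeg (t.A i)) ++
     t.D)

/-- Side conditions of the TRes rule. -/
def wf (ord : Lit → Lit → Prop) (t : TResApp) : Prop :=
  0 < t.m ∧ t.m ≤ t.n ∧
  (∀ L ∈ t.D, L.pos = true) ∧
  IsSimMGU t.σ' ((List.finRange t.n).map fun i => (t.A i, t.B i)) ∧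
  IsSimMGU t.σ (((List.finRange t.n).filter fun i => i.1 < t.m).map fun i => (t.A i, t.B i)) ∧
  (∀ i : Fin t.n, i.1 < t.m ↔ ∃ x, IsTopVar t.n t.A t.σ' x ∧ x ∈ (t.A i).vars) ∧
  (∀ i, strictMaxIn ord (Lit.mkPos (t.B i)) (t.Ds i)) ∧
  (∀ i, Clause.vars (t.sidePremise i) ∩ Clause.vars t.mainPremise = ∅) ∧
  (∀ i j, i ≠ j → Clause.vars (t.sidePremise i) ∩ Clause.vars (t.sidePremise j) = ∅)

end TResApp

/-! ### The generating inferences of T-Inf -/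

/-- The conclusion-generating inferences of the top-variable inference system T-Inf:
ordered resolution with selection (Res), ordered factoring (Fact), and top-variable
resolution (TRes). `TInfInf ord sel ps c` means `c` is the conclusion of an inference
with premises `ps`. -/
inductive TInfInf (ord : Lit → Lit → Prop) (sel : SelFn) : List Clause → Clause → Prop
  | res {B A : Atom} {D1 D : Clause} {σ : Subst} :
      IsMGU σ A B →
      sel (Lit.mkPos B :: D1) = ∅ →
      strictMaxIn ord (Lit.mkPos B) D1 →
      Eligible ord sel (Lit.mkNeg A :: D) (Lit.mkNeg A) →
      Clause.vars (Lit.mkPos B :: D1) ∩ Clause.vars (Lit.mkNeg A :: D) = ∅ →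
      TInfInf ord sel [Lit.mkPos B :: D1, Lit.mkNeg A :: D] (Clause.subst σ (D1 ++ D))
  | fact {A1 A2 : Atom} {C : Clause} {σ : Subst} :
      IsMGU σ A1 A2 →
      sel (C ++ [Lit.mkPos A1, Lit.mkPos A2]) = ∅ →
      maxIn ord (Lit.mkPos A1) (C ++ [Lit.mkPos A2]) →
      TInfInf ord sel [C ++ [Lit.mkPos A1, Lit.mkPos A2]] (Clause.subst σ (C ++ [Lit.mkPos A1]))
  | tres (t : TResApp) :
      t.wf ord →
      (∀ i, sel (t.sidePremise i) = ∅) →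
      (∀ i : Fin t.n, i.1 < t.m → Lit.mkNeg (t.A i) ∈ sel t.mainPremise) →
      TInfInf ord sel (t.sidePremises ++ [t.mainPremise]) t.resolvent

/-- `N` is saturated up to redundancy with respect to the inference system `inf`:
every inference from non-redundant premises of `N` is redundant in `N`. -/
def SaturatedUpToRedundancy (ord : Lit → Lit → Prop)
    (inf : List Clause → Clause → Prop) (N : Set Clause) : Prop :=
  ∀ (ps : List Clause) (c : Clause), inf ps c → (∀ p ∈ ps, p ∈ N) →
    RedundantInference ord N ps c


/-! ### Surface literals, chained and isolated variables of query clauses -/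

/-- `L` is a surface literal of `Q`: no other literal of `Q` has a strictly larger
variable set. -/
def SurfaceLit (Q : Clause) (L : Lit) : Prop :=
  L ∈ Q ∧ ∀ L' ∈ Q, ¬ (L.vars ⊂ L'.vars)

/-- `x` is a chained variable of `Q`: it occurs in two distinct surface literals with
different, mutually non-inclusive variable sets. -/
def ChainedVar (Q : Clause) (x : ℕ) : Prop :=
  ∃ L L' : Lit, SurfaceLit Q L ∧ SurfaceLit Q L' ∧ L ≠ L' ∧
    ¬ L.vars ⊆ L'.vars ∧ ¬ L'.vars ⊆ L.vars ∧ x ∈ L.vars ∧ x ∈ L'.vars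

/-- `x` is an isolated variable of `Q`: a variable of `Q` that is not chained. -/
def IsolatedVar (Q : Clause) (x : ℕ) : Prop := x ∈ Clause.vars Q ∧ ¬ ChainedVar Q x

/-- A query clause is isolated-only if all its variables are isolated. -/
def Clause.isolatedOnly (Q : Clause) : Prop := ∀ x ∈ Clause.vars Q, ¬ ChainedVar Q x

/-- A query clause is chained-only if all its variables are chained. -/
def Clause.chainedOnly (Q : Clause) : Prop := ∀ x ∈ Clause.vars Q, ChainedVar Q x

/-! ### The inferences of Q-AR -/

/-- The inferences of Q-AR: the T-Inf inferences together with the separation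
inferences (Sep) and the T-Trans renaming inferences, both introducing fresh,
smaller definer predicate symbols. -/
inductive QARInf (ord : Lit → Lit → Prop) (sel : SelFn) : List Clause → Clause → Prop
  | tinf {ps : List Clause} {c : Clause} : TInfInf ord sel ps c → QARInf ord sel ps c
  | sepL {C D : Clause} {ds : ℕ} {xs : List ℕ} :
      Separable C D → {x | x ∈ xs} = Clause.vars C ∩ Clause.vars D →
      ds ∉ Clause.preds (C ++ D) →
      QARInf ord sel [C ++ D] (Lit.mkNeg ⟨ds, xs.map Term.var⟩ :: C)
  | sepR {C D : Clause} {ds : ℕ} {xs : List ℕ} :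
      Separable C D → {x | x ∈ xs} = Clause.vars C ∩ Clause.vars D →
      ds ∉ Clause.preds (C ++ D) →
      QARInf ord sel [C ++ D] (Lit.mkPos ⟨ds, xs.map Term.var⟩ :: D)
  | ttransDef {E F : Clause} {d : ℕ} {xs : List ℕ} :
      {x | x ∈ xs} = Clause.vars E → d ∉ Clause.preds (F ++ E) →
      QARInf ord sel [F ++ E] (Lit.mkPos ⟨d, xs.map Term.var⟩ :: E)
  | ttransQ {E F : Clause} {d : ℕ} {xs : List ℕ} :
      {x | x ∈ xs} = Clause.vars E → d ∉ Clause.preds (F ++ E) →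
      QARInf ord sel [F ++ E] (F ++ [Lit.mkNeg ⟨d, xs.map Term.var⟩])

/-! ### Q-AR as a transition system on clause sets -/

/-- A single derivation step of the procedure Q-AR on clause sets: adding a
Res/TRes/Fact conclusion, replacement by a condensation, deletion of tautologies and
variants, separation (Sep) and the renaming T-Trans (both with fresh definer
predicate symbols). -/
inductive QARStep : Set Clause → Set Clause → Prop
  | res {N : Set Clause} {A B : Atom} {D1 D : Clause} {σ : Subst} :
      (Lit.mkPos B :: D1) ∈ N → (Lit.mkNeg A :: D) ∈ N → IsMGU σ A B →
      QARStep N (insert (Clause.subst σ (D1 ++ D)) N)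
  | tres {N : Set Clause} (t : TResApp) :
      (∀ i, t.sidePremise i ∈ N) → t.mainPremise ∈ N →
      (∀ i : Fin t.n, i.1 < t.m → Atom.subst t.σ (t.A i) = Atom.subst t.σ (t.B i)) →
      QARStep N (insert t.resolvent N)
  | fact {N : Set Clause} {A1 A2 : Atom} {C : Clause} {σ : Subst} :
      (C ++ [Lit.mkPos A1, Lit.mkPos A2]) ∈ N → IsMGU σ A1 A2 →
      QARStep N (insert (Clause.subst σ (C ++ [Lit.mkPos A1])) N)
  | conden {N : Set Clause} {C D : Clause} :
      C ∈ N → IsCondensation D C → QARStep N (insert D (N \ {C}))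
  | deleteTaut {N : Set Clause} {C : Clause} :
      C ∈ N → Tautology C → QARStep N (N \ {C})
  | deleteVariant {N : Set Clause} {C C' : Clause} :
      C ∈ N → C' ∈ N → C ≠ C' → Variant C C' → QARStep N (N \ {C})
  | sep {N : Set Clause} {C D : Clause} {ds : ℕ} {xs : List ℕ} :
      (C ++ D) ∈ N → Separable C D → {x | x ∈ xs} = Clause.vars C ∩ Clause.vars D →
      ds ∉ SetPreds N →
      QARStep N (insert (Lit.mkNeg ⟨ds, xs.map Term.var⟩ :: C)
        (insert (Lit.mkPos ⟨ds, xs.map Term.var⟩ :: D) (N \ {C ++ D})))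
  | ttrans {N : Set Clause} {E F : Clause} {d : ℕ} {xs : List ℕ} :
      (F ++ E) ∈ N → {x | x ∈ xs} = Clause.vars E → d ∉ SetPreds N →
      QARStep N (insert (F ++ [Lit.mkNeg ⟨d, xs.map Term.var⟩])
        (insert (Lit.mkPos ⟨d, xs.map Term.var⟩ :: E) (N \ {F ++ E})))

private lemma subst_app (σ : Subst) (h : Head) (ts : List Term) :
    Term.subst σ (.app h ts) = .app h (ts.map (Term.subst σ)) := by
  rw [Term.subst]
  congr 1
  rw [List.map_attach_eq_pmap]
  simp [List.pmap_eq_map]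

private lemma sizeOf_lt_of_mem' {t : Term} {ts : List Term} (h : t ∈ ts) (g : Head) :
    sizeOf t < sizeOf (Term.app g ts) := by
  have := List.sizeOf_lt_of_mem h
  simp only [Term.app.sizeOf_spec]
  omega

private lemma isConst_app {h : Head} {ts : List Term} (hc : (Term.app h ts).isConst) :
    (∃ n, h = .cn n) ∧ ts = [] := by
  unfold Term.isConst at hc
  match h, ts with
  | .cn n, [] => exact ⟨⟨n, rfl⟩, rfl⟩
  | .cn n, (t :: ts) => exact absurd hc (by simp)
  | .fn n, ts => exact absurd hc (by simp)
  | .pr n, ts => exact absurd hc (by simp)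

private lemma compound_exists_app {t : Term} (ht : t.isCompound) :
    ∃ h ts, t = .app h ts := by
  match t with
  | .var x => exact absurd trivial ht.1
  | .app h ts => exact ⟨h, ts, rfl⟩

private lemma compound_subst {t : Term} (σ : Subst) (ht : t.isCompound) :
    (t.subst σ).isCompound := by
  obtain ⟨h, ts, rfl⟩ := compound_exists_app ht
  rw [subst_app]
  refine ⟨fun hv => hv, fun hc => ?_⟩
  obtain ⟨⟨n, rfl⟩, hnil⟩ := isConst_app hc
  have : ts = [] := by simpa using hnil
  exact ht.2 (by subst this; trivial)

private lemma flat_subterm {s t : Term} (hf : t.flatArg) (hsub : s.SubtermOf t) : s = t := by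
  cases hsub with
  | refl => rfl
  | @app h' ts' u' hu hsu =>
    exfalso
    rcases hf with hv | hc
    · exact hv
    · obtain ⟨_, rfl⟩ := isConst_app hc
      exact absurd hu (by simp)

private lemma flat_not_compound {t : Term} (hf : t.flatArg) (hc : t.isCompound) : False := by
  rcases hf with h | h
  · exact hc.1 h
  · exact hc.2 h

private lemma flat_hasVar {t : Term} {x : ℕ} (hf : t.flatArg) (hv : t.HasVar x) :
    t = .var x := by
  cases hv with
  | var => rfl
  | app hmem hvt =>
    exfalso
    rcases hf with h | h
    · exact h
    · obtain ⟨_, rfl⟩ := isConst_app h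
      exact absurd hmem (by simp)

private lemma hasVar_flat_app {h : Head} {ts : List Term} {x : ℕ}
    (hflat : ∀ u ∈ ts, u.flatArg) (hv : (Term.app h ts).HasVar x) : Term.var x ∈ ts := by
  cases hv with
  | app hmem hvt =>
    have ht := flat_hasVar (hflat _ hmem) hvt
    exact ht ▸ hmem

/-- From `hasCompound` of a simple atom: a compound term occurs as a direct argument. -/
private lemma compound_arg_of_simple {A : Atom} (hs : A.simple)
    (hc : ∃ s : Term, (∃ u ∈ A.args, s.SubtermOf u) ∧ s.isCompound) :
    ∃ s ∈ A.args, s.isCompound := by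
  obtain ⟨s, ⟨u, hu, hsub⟩, hcomp⟩ := hc
  have hsu := hs u hu
  cases hsub with
  | refl => exact ⟨_, hu, hcomp⟩
  | @app h ts w hw hsw =>
    have hflat : w.flatArg := by
      unfold Term.simpleArg at hsu
      exact hsu w hw
    have := flat_subterm hflat hsw
    subst this
    exact absurd hcomp (fun hc => flat_not_compound hflat hc)

/-- One direction of the matching lemma. -/
private lemma compound_match_dir (A1 A2 : Atom) (σ : Subst)
    (hs1 : A1.simple) (hs2 : A2.simple)
    (hcov1 : ∀ t : Term, (∃ u ∈ A1.args, t.SubtermOf u) → t.isCompound → t.vars = A1.vars)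
    (hcov2 : ∀ t : Term, (∃ u ∈ A2.args, t.SubtermOf u) → t.isCompound → t.vars = A2.vars)
    (hc2 : ∃ s : Term, (∃ u ∈ A2.args, s.SubtermOf u) ∧ s.isCompound)
    (huni : A1.args.map (Term.subst σ) = A2.args.map (Term.subst σ)) :
    ∀ (p : ℕ) (t u : Term), A1.args[p]? = some t → A2.args[p]? = some u →
      t.isCompound → u.isCompound := by
  intro p t u hpt hpu htc
  by_contra huc
  -- t σ = u σ
  have htu : Term.subst σ t = Term.subst σ u := by
    have h1 : (A1.args.map (Term.subst σ))[p]? = some (Term.subst σ t) := by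
      simp [List.getElem?_map, hpt]
    have h2 : (A2.args.map (Term.subst σ))[p]? = some (Term.subst σ u) := by
      simp [List.getElem?_map, hpu]
    rw [huni] at h1
    rw [h1] at h2
    exact (Option.some.injEq _ _ ▸ h2)
  have hu_mem : u ∈ A2.args := List.mem_of_getElem? hpu
  have ht_mem : t ∈ A1.args := List.mem_of_getElem? hpt
  obtain ⟨ht', ts, rfl⟩ := compound_exists_app htc
  have hts_flat : ∀ w ∈ ts, w.flatArg := hs1 _ ht_mem
  -- u must be a variable
  have hu_var : ∃ x, u = Term.var x := by
    match u with
    | .var x => exact ⟨x, rfl⟩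
    | .app hu' us =>
      exfalso
      have : (Term.app hu' us).isConst := by
        by_contra hconst
        exact huc ⟨fun hv => hv, hconst⟩
      obtain ⟨⟨n, rfl⟩, rfl⟩ := isConst_app this
      -- tσ = app cn []
      rw [subst_app, subst_app] at htu
      simp at htu
      obtain ⟨rfl, htnil⟩ := htu
      have : ts = [] := by simpa using htnil
      subst this
      exact htc.2 trivial
  obtain ⟨x, rfl⟩ := hu_var
  have hσx : Term.subst σ (Term.var x) = σ x := by rw [Term.subst]
  rw [hσx] at htu
  -- compound argument s of A2
  obtain ⟨s, hs_mem, hs_comp⟩ := compound_arg_of_simple hs2 hc2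
  obtain ⟨hs', ss, rfl⟩ := compound_exists_app hs_comp
  have hss_flat : ∀ w ∈ ss, w.flatArg := hs2 _ hs_mem
  -- x ∈ vars s
  have hx_A2 : x ∈ A2.vars := ⟨Term.var x, hu_mem, Term.HasVar.var x⟩
  have hvars_s : (Term.app hs' ss).vars = A2.vars :=
    hcov2 _ ⟨_, hs_mem, Term.SubtermOf.refl _⟩ hs_comp
  have hx_s : (Term.app hs' ss).HasVar x := by
    have : x ∈ (Term.app hs' ss).vars := hvars_s ▸ hx_A2
    exact this
  have hx_mem_ss : Term.var x ∈ ss := hasVar_flat_app hss_flat hx_s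
  -- index q of s in A2.args, corresponding argument v of A1
  obtain ⟨q, hq⟩ := List.getElem?_of_mem hs_mem
  have hlen : A1.args.length = A2.args.length := by
    have := congrArg List.length huni
    simpa using this
  have hq_lt : q < A1.args.length := by
    rw [hlen]
    exact (List.getElem?_eq_some_iff.mp hq).1
  set v := A1.args[q] with hv_def
  have hv_mem : v ∈ A1.args := List.getElem_mem _
  have hvq : A1.args[q]? = some v := List.getElem?_eq_getElem hq_lt
  have hvs : Term.subst σ v = Term.subst σ (Term.app hs' ss) := by
    have h1 : (A1.args.map (Term.subst σ))[q]? = some (Term.subst σ v) := by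
      simp [List.getElem?_map, hvq]
    have h2 : (A2.args.map (Term.subst σ))[q]? = some (Term.subst σ (Term.app hs' ss)) := by
      simp [List.getElem?_map, hq]
    rw [huni] at h1
    rw [h1] at h2
    exact (Option.some.injEq _ _ ▸ h2)
  -- vars of t: covering of A1
  have hvars_t : (Term.app ht' ts).vars = A1.vars :=
    hcov1 _ ⟨_, ht_mem, Term.SubtermOf.refl _⟩ htc
  -- helper: size of σ x vs σ y if y ∈ vars t
  have key : ∀ y : ℕ, σ y = Term.subst σ (Term.app ht' ts) → y ∈ A1.vars → False := by
    intro y hσy hy_A1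
    have hy_t : (Term.app ht' ts).HasVar y := by
      have : y ∈ (Term.app ht' ts).vars := hvars_t ▸ hy_A1
      exact this
    have hy_mem_ts : Term.var y ∈ ts := hasVar_flat_app hts_flat hy_t
    have hmem : σ y ∈ ts.map (Term.subst σ) := by
      have : Term.subst σ (Term.var y) ∈ ts.map (Term.subst σ) :=
        List.mem_map_of_mem hy_mem_ts
      rwa [Term.subst] at this
    have hlt : sizeOf (σ y) < sizeOf (Term.app ht' (ts.map (Term.subst σ))) :=
      sizeOf_lt_of_mem' hmem ht'
    rw [← subst_app, ← hσy] at hlt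
    omega
  -- σ x occurs in sσ
  have hσx_mem : σ x ∈ ss.map (Term.subst σ) := by
    have : Term.subst σ (Term.var x) ∈ ss.map (Term.subst σ) :=
      List.mem_map_of_mem hx_mem_ss
    rwa [Term.subst] at this
  -- case analysis on v
  match v, hvs, hv_mem with
  | .var y, hvs, hv_mem =>
    have hσy : σ y = Term.subst σ (Term.app hs' ss) := by rw [← hvs, Term.subst]
    -- sizes: sizeOf (σ x) < sizeOf (σ y) and key gives contradiction via σ y = sσ
    -- y ∈ A1.vars
    have hy_A1 : y ∈ A1.vars := ⟨Term.var y, hv_mem, Term.HasVar.var y⟩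
    -- σ y = sσ contains σ x; σ x = tσ contains σ y
    have h1 : sizeOf (σ x) < sizeOf (σ y) := by
      have := sizeOf_lt_of_mem' hσx_mem hs'
      rw [← subst_app, ← hσy] at this
      exact this
    -- σ x = tσ and y ∈ vars t so σ y ∈ args of tσ
    have hy_t : (Term.app ht' ts).HasVar y := by
      have : y ∈ (Term.app ht' ts).vars := hvars_t ▸ hy_A1
      exact this
    have hy_mem_ts : Term.var y ∈ ts := hasVar_flat_app hts_flat hy_t
    have hmem : σ y ∈ ts.map (Term.subst σ) := by
      have : Term.subst σ (Term.var y) ∈ ts.map (Term.subst σ) :=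
        List.mem_map_of_mem hy_mem_ts
      rwa [Term.subst] at this
    have h2 : sizeOf (σ y) < sizeOf (σ x) := by
      have := sizeOf_lt_of_mem' hmem ht'
      rw [← subst_app, htu] at this
      exact this
    omega
  | .app hv' vs, hvs, hv_mem =>
    rw [subst_app, subst_app] at hvs
    rw [Term.app.injEq] at hvs
    obtain ⟨rfl, hargs⟩ := hvs
    -- var x is at some index k of ss
    obtain ⟨k, hk⟩ := List.getElem?_of_mem hx_mem_ss
    have hk2 : (ss.map (Term.subst σ))[k]? = some (σ x) := by
      simp [List.getElem?_map, hk, Term.subst]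
    rw [← hargs] at hk2
    have hk_lt : k < vs.length := by
      have := (List.getElem?_eq_some_iff.mp hk2).1
      simpa using this
    obtain ⟨w, hwk, hwσ⟩ : ∃ w, vs[k]? = some w ∧ Term.subst σ w = σ x := by
      refine ⟨vs[k], List.getElem?_eq_getElem hk_lt, ?_⟩
      have : (vs.map (Term.subst σ))[k]? = some (Term.subst σ vs[k]) := by
        simp [List.getElem?_map, List.getElem?_eq_getElem hk_lt]
      rw [hk2] at this
      exact (Option.some.injEq _ _ ▸ this).symm
    have hw_mem : w ∈ vs := List.mem_of_getElem? hwk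
    have hvs_flat : ∀ z ∈ vs, z.flatArg := by
      have := hs1 _ hv_mem
      unfold Term.simpleArg at this
      exact this
    rcases hvs_flat w hw_mem with hwvar | hwconst
    · -- w is a variable y
      match w, hwσ with
      | .var y, hwσ =>
        have hσy : σ y = Term.subst σ (Term.app ht' ts) := by
          rw [htu, ← hwσ, Term.subst]
        have hy_A1 : y ∈ A1.vars :=
          ⟨_, hv_mem, Term.HasVar.app hw_mem (Term.HasVar.var y)⟩
        exact key y hσy hy_A1
    · -- w is a constant: w σ = w = σ x = tσ compound, contradiction
      obtain ⟨wh, wts, rfl⟩ : ∃ wh wts, w = Term.app wh wts := by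
        match w with
        | .var z => exact absurd hwconst (by simp [Term.isConst])
        | .app wh wts => exact ⟨wh, wts, rfl⟩
      obtain ⟨⟨n, rfl⟩, rfl⟩ := isConst_app hwconst
      rw [subst_app, ← htu, subst_app, Term.app.injEq] at hwσ
      obtain ⟨h1, h2⟩ := hwσ
      have hnil : ts = [] := by simpa using h2.symm
      subst hnil
      exact htc.2 (by rw [← h1]; trivial)

/-- Lemma C.4:  Let `L₁` and `L₂` be two non-ground, simple, covering
literals, each containing a compound term, and unifiable by an mgu `σ`.  Then the
compound terms of `L₁` and `L₂` match each other:  an argument of `L₁` is a compound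
term iff the argument of `L₂` at the same position is. -/
theorem compound_terms_match (L1 L2 : Lit) (σ : Subst)
    (hg1 : ¬ L1.ground) (hg2 : ¬ L2.ground)
    (hs1 : L1.simple) (hs2 : L2.simple)
    (hcov1 : L1.covering) (hcov2 : L2.covering)
    (hc1 : L1.hasCompound) (hc2 : L2.hasCompound)
    (hmgu : Lit.isMGU σ L1 L2) :
    ∀ (p : ℕ) (t u : Term), L1.atom.args[p]? = some t → L2.atom.args[p]? = some u →
      (t.isCompound ↔ u.isCompound) := by
  have huni : L1.atom.args.map (Term.subst σ) = L2.atom.args.map (Term.subst σ) := by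
    have h := hmgu.1
    unfold Lit.unifies Lit.subst Atom.subst at h
    have := congrArg Lit.atom h
    simp only [Lit.mk.injEq] at h
    exact congrArg Atom.args h.2
  have hcov1' : ∀ t : Term, (∃ u ∈ L1.atom.args, t.SubtermOf u) → t.isCompound →
      t.vars = L1.atom.vars := fun t h c => hcov1 t h c
  have hcov2' : ∀ t : Term, (∃ u ∈ L2.atom.args, t.SubtermOf u) → t.isCompound →
      t.vars = L2.atom.vars := fun t h c => hcov2 t h c
  have hc1' : ∃ s : Term, (∃ u ∈ L1.atom.args, s.SubtermOf u) ∧ s.isCompound := hc1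
  have hc2' : ∃ s : Term, (∃ u ∈ L2.atom.args, s.SubtermOf u) ∧ s.isCompound := hc2
  intro p t u hpt hpu
  constructor
  · exact compound_match_dir L1.atom L2.atom σ hs1 hs2 hcov1' hcov2' hc2' huni p t u hpt hpu
  · exact compound_match_dir L2.atom L1.atom σ hs2 hs1 hcov2' hcov1' hc1' huni.symm p u t hpu hpt
end QGF
end

section
/- An indecomposable query clause is an isolated-only query clause if and only if it is a guarded clause. -/
/-!
Common formalization of first-order clausal logic (without equality), following
"Resolution-based query answering and rewriting for the (loosely) guarded fragment".
-/

set_option linter.unusedVariables false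

namespace QGF

/-! ### Auxiliary lemmas for Lemma E.3 -/

lemma flatArg_simpleArg (t : Term) (h : t.flatArg) : t.simpleArg := by
  cases t with
  | var x => trivial
  | app hd ts =>
    rcases h with h | h
    · exact h.elim
    · cases hd with
      | cn n =>
        cases ts with
        | nil => intro u hu; simp at hu
        | cons a l => exact h.elim
      | fn n => exact h.elim
      | pr n => exact h.elim

lemma flatArg_not_compound (t : Term) (h : t.flatArg) : ¬ t.isCompound := by
  rintro ⟨h1, h2⟩
  rcases h with h | h
  · exact h1 h
  · exact h2 h

lemma subterm_of_flat {t u : Term} (hu : u.flatArg) (h : t.SubtermOf u) : t.flatArg := by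
  cases h with
  | refl => exact hu
  | @app hd ts t' hmem hsub =>
    rcases hu with h | h
    · exact h.elim
    · cases hd with
      | cn n =>
        cases ts with
        | nil => simp at hmem
        | cons a l => exact h.elim
      | fn n => exact h.elim
      | pr n => exact h.elim

lemma flat_clause_simple (C : Clause) (h : C.flat) : C.simple :=
  fun L hL t ht => flatArg_simpleArg t (h L hL t ht)

lemma flat_clause_covering (C : Clause) (h : C.flat) : C.covering := by
  rintro t ⟨L, hL, u, hu, hsub⟩ hc
  exact absurd hc (flatArg_not_compound t (subterm_of_flat (h L hL u hu) hsub))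

lemma exists_surface_above (Q : Clause) (M : Lit) (hM : M ∈ Q) :
    ∃ L, SurfaceLit Q L ∧ M.vars ⊆ L.vars := by
  have hfin : {L' : Lit | L' ∈ Q ∧ M.vars ⊆ L'.vars}.Finite :=
    Q.finite_toSet.subset (fun x hx => hx.1)
  obtain ⟨L, hLs, hmax⟩ :=
    Set.Finite.exists_maximalFor Lit.vars _ hfin ⟨M, hM, subset_rfl⟩
  refine ⟨L, ⟨hLs.1, fun L' hL' hss => ?_⟩, hLs.2⟩
  exact hss.ne (hss.subset.antisymm (hmax ⟨hL', hLs.2.trans hss.subset⟩ hss.subset))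

lemma surface_disjoint (Q : Clause) (hiso : Q.isolatedOnly) {L M : Lit}
    (hL : SurfaceLit Q L) (hM : M ∈ Q) (hns : ¬ M.vars ⊆ L.vars) :
    ∀ x, x ∈ M.vars → x ∉ L.vars := by
  intro x hxM hxL
  obtain ⟨L', hL', hML'⟩ := exists_surface_above Q M hM
  have h1 : ¬ L'.vars ⊆ L.vars := fun h => hns (hML'.trans h)
  have h2 : ¬ L.vars ⊆ L'.vars := by
    intro h
    rcases eq_or_ne L.vars L'.vars with he | hne'
    · exact h1 (he ▸ subset_rfl)
    · exact hL.2 L' hL'.1 (h.ssubset_of_ne hne')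
  have hne : L ≠ L' := fun h => h1 (h ▸ subset_rfl)
  exact hiso x ⟨M, hM, hxM⟩ ⟨L, L', hL, hL', hne, h2, h1, hxL, hML' hxM⟩

/-- Lemma E.3:  An indecomposable query clause is an isolated-only
query clause if and only if it is a guarded clause. -/
theorem isolatedOnly_iff_guarded (Q : Clause)
    (hquery : Clause.query Q) (hind : Clause.indecomposable Q) :
    Clause.isolatedOnly Q ↔ Clause.guarded Q := by
  classical
  constructor
  · intro hiso
    refine ⟨flat_clause_simple Q hquery.1, flat_clause_covering Q hquery.1, ?_⟩
    cases Q with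
    | nil =>
      left
      show Clause.vars [] = ∅
      apply Set.eq_empty_iff_forall_notMem.mpr
      rintro x ⟨L, hL, -⟩
      simp at hL
    | cons M0 Qs =>
      obtain ⟨L, hL, -⟩ := exists_surface_above (M0 :: Qs) M0 (List.mem_cons_self (a := M0) (l := Qs))
      set Q : Clause := M0 :: Qs with hQdef
      by_cases hall : ∀ M' ∈ Q, M'.vars ⊆ L.vars
      · right
        refine ⟨L, hL.1, hquery.2 L hL.1, hquery.1 L hL.1, ?_⟩
        apply Set.Subset.antisymm
        · exact fun x hx => ⟨L, hL.1, hx⟩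
        · rintro x ⟨M', hM', hx⟩
          exact hall M' hM' hx
      · exfalso
        push_neg at hall
        obtain ⟨M', hM', hns⟩ := hall
        set p : Lit → Bool := fun L' => decide (L'.vars ⊆ L.vars) with hpdef
        refine hind ⟨Q.filter p, Q.filter (fun x => !p x), ?_, ?_, ?_, ?_⟩
        · exact List.ne_nil_of_mem
            (List.mem_filter.mpr ⟨hL.1, by simp [hpdef]⟩)
        · exact List.ne_nil_of_mem
            (List.mem_filter.mpr ⟨hM', by simp [hpdef, hns]⟩)
        · have hco : ((Q.filter p ++ Q.filter (fun x => !p x) : List Lit) : Multiset Lit)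
              = (↑(Q.filter p) + ↑(Q.filter (fun x => !p x)) : Multiset Lit) := rfl
          rw [← hco]
          exact (Multiset.coe_eq_coe.mpr (List.filter_append_perm p Q)).symm
        · apply Set.eq_empty_iff_forall_notMem.mpr
          rintro x ⟨⟨N, hN, hxN⟩, ⟨N', hN', hxN'⟩⟩
          have hN2 := List.mem_filter.mp hN
          have hN2' := List.mem_filter.mp hN'
          have hsub : N.vars ⊆ L.vars := by
            have := hN2.2
            simp only [hpdef, decide_eq_true_eq] at this
            exact this
          have hnsub : ¬ N'.vars ⊆ L.vars := by
            have := hN2'.2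
            simp only [hpdef, Bool.not_eq_true', decide_eq_false_iff_not] at this
            exact this
          exact surface_disjoint Q hiso hL hN2'.1 hnsub x hxN' (hsub hxN)
  · rintro ⟨hsimp, hcov, hg | ⟨L, hLQ, hLneg, hLflat, hLvars⟩⟩
    · intro x hx _
      have hg' : Clause.vars Q = ∅ := hg
      rw [hg'] at hx
      exact Set.notMem_empty x hx
    · rintro x hx ⟨L1, L2, hs1, hs2, hne, h12, h21, hx1, hx2⟩
      have aux : ∀ L', SurfaceLit Q L' → L'.vars = L.vars := by
        intro L' hs
        have sub : L'.vars ⊆ L.vars := by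
          intro y hy
          rw [hLvars]
          exact ⟨L', hs.1, hy⟩
        rcases eq_or_ne L'.vars L.vars with h | h
        · exact h
        · exact absurd (sub.ssubset_of_ne h) (hs.2 L hLQ)
      exact h12 (by rw [aux L1 hs1, aux L2 hs2])
end QGF
end
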